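/- Let k be a field, T a finite set, and R = ∏_{t∈T} k. For t ∈ T let ε_t ∈ R be the element whose t-component is 1 and whose other components are 0. Then every idempotent matrix μ ∈ M_m(R) is equivalent to a matrix of the form diag(ε_{t_1}, …, ε_{t_n}): there exist n ∈ ℕ, elements t_1, …, t_n ∈ T, and matrices a ∈ M_{m×n}(R), b ∈ M_{n×m}(R) such that a·b = μ and b·a = diag(ε_{t_1}, …, ε_{t_n}). -/

import Mathlib

theorem field_case {k : Type*} [Field k] {m : ℕ}
    (e : Matrix (Fin m) (Fin m) k) (he : e * e = e) :
    ∃ (r : ℕ) (a : Matrix (Fin m) (Fin r) k) (b : Matrix (Fin r) (Fin m) k),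
      a * b = e ∧ b * a = 1 := by
  set f : (Fin m → k) →ₗ[k] (Fin m → k) := Matrix.toLin' e with hfdef
  have hf : f ∘ₗ f = f := by
    rw [hfdef, ← Matrix.toLin'_mul, he]
  set V := LinearMap.range f with hV
  set B : Module.Basis (Fin (Module.finrank k V)) k V := Module.finBasis k V with hB
  set A : V →ₗ[k] (Fin m → k) := V.subtype with hA
  set Bm : (Fin m → k) →ₗ[k] V := f.codRestrict V (fun x => LinearMap.mem_range_self f x) with hBm
  have hAB : A ∘ₗ Bm = f := LinearMap.subtype_comp_codRestrict _ _ _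
  have hBA : Bm ∘ₗ A = LinearMap.id := by
    apply LinearMap.ext
    rintro ⟨v, hv⟩
    obtain ⟨x, rfl⟩ := hv
    apply Subtype.ext
    simp only [LinearMap.comp_apply, hBm, hA, Submodule.subtype_apply,
      LinearMap.codRestrict_apply, LinearMap.id_coe, id_eq]
    have := congrArg (fun g => g x) (congrArg DFunLike.coe hf)
    simpa using this
  refine ⟨Module.finrank k V,
    LinearMap.toMatrix B (Pi.basisFun k (Fin m)) A,
    LinearMap.toMatrix (Pi.basisFun k (Fin m)) B Bm, ?_, ?_⟩
  · rw [← LinearMap.toMatrix_comp _ B _, hAB]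
    rw [LinearMap.toMatrix_eq_toMatrix', hfdef, LinearMap.toMatrix'_toLin']
  · rw [← LinearMap.toMatrix_comp _ (Pi.basisFun k (Fin m)) _, hBA, LinearMap.toMatrix_id]

/-- Let `k` be a field, `T` a finite set and `R = ∏_{t ∈ T} k`.  For `t ∈ T` let
`ε_t ∈ R` be the element with `t`-component `1` and all other components `0`.  Then every
idempotent matrix `μ ∈ M_m(R)` is equivalent to a diagonal matrix
`diag(ε_{t_1}, …, ε_{t_n})`: there are `n ∈ ℕ`, `t_1, …, t_n ∈ T` and matrices
`a ∈ M_{m×n}(R)`, `b ∈ M_{n×m}(R)` with `a·b = μ` and `b·a = diag(ε_{t_1}, …, ε_{t_n})`. -/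
theorem idempotent_matrix_equiv_diagonal {k : Type*} [Field k]
    {T : Type*} [Fintype T] [DecidableEq T]
    {m : ℕ} (μ : Matrix (Fin m) (Fin m) (T → k)) (hμ : μ * μ = μ) :
    ∃ (n : ℕ) (ts : Fin n → T) (a : Matrix (Fin m) (Fin n) (T → k))
      (b : Matrix (Fin n) (Fin m) (T → k)),
      a * b = μ ∧ b * a = Matrix.diagonal fun i => Pi.single (ts i) (1 : k) := by
  classical
  have key : ∀ t : T, ∃ (r : ℕ) (a : Matrix (Fin m) (Fin r) k) (b : Matrix (Fin r) (Fin m) k),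
      a * b = Matrix.of (fun i j => μ i j t) ∧ b * a = 1 := by
    intro t
    apply field_case
    ext i j
    have h1 := congrFun (congrFun (congrFun (congrArg (fun M => M.1) (congrArg
      (fun M : Matrix (Fin m) (Fin m) (T → k) => (M, ())) hμ)) i) j) t
    simp only [Matrix.mul_apply, Finset.sum_apply, Pi.mul_apply] at h1 ⊢
    exact h1
  choose r a b hab hba using key
  set S := (Σ t : T, Fin (r t)) with hS
  let eqv : Fin (Fintype.card S) ≃ S := (Fintype.equivFin S).symm
  refine ⟨Fintype.card S, fun q => (eqv q).1,
    Matrix.of (fun i q => Pi.single (eqv q).1 (a (eqv q).1 i (eqv q).2)),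
    Matrix.of (fun q i => Pi.single (eqv q).1 (b (eqv q).1 (eqv q).2 i)), ?_, ?_⟩
  · ext i j s
    have hμs : ∀ i j, (a s * b s) i j = μ i j s := by
      intro i j
      have := congrFun (congrFun (hab s) i) j
      simpa using this
    simp only [Matrix.mul_apply, Finset.sum_apply, Pi.mul_apply, Matrix.of_apply,
      Pi.single_apply]
    rw [Fintype.sum_equiv eqv _ (fun p : S =>
      (if s = p.1 then a p.1 i p.2 else 0) * (if s = p.1 then b p.1 p.2 j else 0))
      (fun q => rfl)]
    rw [← Finset.univ_sigma_univ, Finset.sum_sigma]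
    have hrw : ∀ x : T, (∑ j2 : Fin (r x),
        (if s = x then a x i j2 else 0) * (if s = x then b x j2 j else 0)) =
        if s = x then ∑ j2 : Fin (r x), a x i j2 * b x j2 j else 0 := by
      intro x
      split <;> simp_all
    rw [Finset.sum_congr rfl (fun x _ => hrw x),
      Finset.sum_ite_eq Finset.univ s (fun t => ∑ j2 : Fin (r t), a t i j2 * b t j2 j)]
    simpa [Matrix.mul_apply] using hμs i j
  · ext q q' s
    have main : ∀ (p p' : S),
        (∑ i : Fin m, (Pi.single p.1 (b p.1 p.2 i) : T → k) s * (Pi.single p'.1 (a p'.1 i p'.2) : T → k) s) =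
        (if p = p' then Pi.single p.1 (1 : k) else (0 : T → k)) s := by
      rintro ⟨t, j2⟩ ⟨t', j2'⟩
      simp only [Pi.single_apply, Sigma.mk.inj_iff, apply_ite (fun g : T → k => g s),
        Pi.zero_apply]
      by_cases h2 : t' = t
      · subst h2
        by_cases h1 : s = t'
        · have hsum : (∑ x : Fin m, b t' j2 x * a t' x j2') = (b t' * a t') j2 j2' :=
            (Matrix.mul_apply).symm
          simp only [h1, if_true, if_pos rfl, hsum, hba t', Matrix.one_apply]
          by_cases hj : j2 = j2'
          · subst hj
            simp
          · rw [if_neg hj, if_neg (fun h => hj (by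
              have := (Sigma.mk.inj_iff.mp h).2
              exact eq_of_heq this))]
        · simp [h1, Pi.single_apply]
      · by_cases h1 : s = t
        · have h3 : ¬ s = t' := fun h => h2 (h.symm.trans h1)
          have h2' : ¬ t = t' := fun h => h2 h.symm
          simp only [h1, h3, if_false, mul_zero, Finset.sum_const_zero, if_neg h3]
          rw [if_neg (fun h => h2' (Sigma.mk.inj_iff.mp h).1)]
          simp [h2']
        · have h2' : ¬ t = t' := fun h => h2 h.symm
          simp only [h1, if_false, zero_mul, Finset.sum_const_zero]
          rw [if_neg (fun h => h2' (Sigma.mk.inj_iff.mp h).1)]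
    have hgoal := main (eqv q) (eqv q')
    simp only [Matrix.mul_apply, Finset.sum_apply, Pi.mul_apply, Matrix.of_apply] at *
    rw [hgoal, Matrix.diagonal_apply]
    by_cases hqq : q = q'
    · subst hqq
      simp
    · rw [if_neg hqq, if_neg (fun h => hqq (eqv.injective h))]
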